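/- Let n ≥ 1 be a natural number. Then w(f_n)(x) > 0 for all x in the open interval (j₁(f_n'), j₁(f_n)), where j₁(f_n') is the first positive zero of f_n' and j₁(f_n) is the first positive zero of f_n (equivalently, the interval (j_{n−1/2,1}, j_{n+1/2,1}) between the first positive zeros of J_{n−1/2} and J_{n+1/2}). -/

import Mathlib

/-- Determinant of the 3x3 Hankel-Wronskian matrix of h (rows of 2nd..4th derivatives). -/
noncomputable def w (f : ℝ → ℝ) (x : ℝ) : ℝ :=
  Matrix.det !![deriv^[2] f x, deriv f x, f x;
    deriv^[3] f x, deriv^[2] f x, deriv f x;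
    deriv^[4] f x, deriv^[3] f x, deriv^[2] f x]

/-- Bessel function of the first kind (for `x > 0`). -/
noncomputable def besselJ (ν : ℝ) (x : ℝ) : ℝ :=
  ∑' k : ℕ, (-1 : ℝ) ^ k / ((Nat.factorial k : ℝ) * Real.Gamma ((k : ℝ) + ν + 1)) *
    (x / 2) ^ (2 * (k : ℝ) + ν)

/-- `fn n x = √(π/2)·x^(n+1/2)·J_(n+1/2)(x)`, via the equivalent recursive definition
`fn 0 = sin`, `fn (n+1) x = ∫_0^x t·fn n t dt`. -/
noncomputable def fn : ℕ → ℝ → ℝ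
  | 0 => fun x => Real.sin x
  | n + 1 => fun x => ∫ t in (0:ℝ)..x, t * fn n t

/-- First positive zero of a function on `(0,∞)`. -/
noncomputable def j1 (g : ℝ → ℝ) : ℝ := sInf {x : ℝ | 0 < x ∧ g x = 0}

open scoped Nat


lemma fn_zero : fn 0 = Real.sin := rfl

lemma fn_succ (n : ℕ) (x : ℝ) : fn (n + 1) x = ∫ t in (0:ℝ)..x, t * fn n t := rfl

lemma continuous_fn : ∀ n, Continuous (fn n)
  | 0 => Real.continuous_sin
  | n + 1 => by
    have h : Continuous fun t : ℝ => t * fn n t := continuous_id.mul (continuous_fn n)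
    exact intervalIntegral.continuous_primitive (fun a b => h.intervalIntegrable a b) 0

lemma hasDerivAt_fn_succ (n : ℕ) (x : ℝ) :
    HasDerivAt (fn (n + 1)) (x * fn n x) x := by
  have h : Continuous fun t : ℝ => t * fn n t := continuous_id.mul (continuous_fn n)
  exact intervalIntegral.integral_hasDerivAt_right (h.intervalIntegrable _ _)
    (h.stronglyMeasurableAtFilter _ _) h.continuousAt

lemma deriv_fn_succ (n : ℕ) : deriv (fn (n + 1)) = fun x => x * fn n x :=
  funext fun x => (hasDerivAt_fn_succ n x).deriv

lemma fn_succ_zero (n : ℕ) : fn (n + 1) 0 = 0 := by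
  simp [fn_succ]

lemma contDiff_fn : ∀ n, ContDiff ℝ ((⊤:ℕ∞):WithTop ℕ∞) (fn n)
  | 0 => Real.contDiff_sin.of_le le_top
  | n + 1 => by
    rw [contDiff_infty_iff_deriv]
    refine ⟨fun x => (hasDerivAt_fn_succ n x).differentiableAt, ?_⟩
    rw [deriv_fn_succ]
    exact contDiff_id.mul (contDiff_fn n)

lemma differentiable_fn (n : ℕ) : Differentiable ℝ (fn n) :=
  (contDiff_fn n).differentiable (by simp)

/-- helper: two differentiable functions with equal derivatives and equal value at 0 agree -/
lemma eq_of_deriv_eq {f g : ℝ → ℝ} (hf : Differentiable ℝ f) (hg : Differentiable ℝ g)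
    (h0 : f 0 = g 0) (h : ∀ x, deriv f x = deriv g x) : f = g := by
  funext x
  have key : ∀ y : ℝ, (f - g) y = (f - g) 0 := by
    intro y
    apply is_const_of_deriv_eq_zero (hf.sub hg)
    intro z
    rw [deriv_sub (hf z) (hg z), h z, sub_self]
  have := key x
  simp only [Pi.sub_apply] at this
  linarith [this, h0]

lemma fn_one : fn 1 = fun x => Real.sin x - x * Real.cos x := by
  apply eq_of_deriv_eq (differentiable_fn 1)
  · exact Real.differentiable_sin.sub (differentiable_id.mul Real.differentiable_cos)
  · simp [fn_succ_zero]
  · intro x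
    rw [deriv_fn_succ]
    have h1 : HasDerivAt (fun y : ℝ => Real.sin y - y * Real.cos y) (x * Real.sin x) x := by
      have : HasDerivAt (fun y : ℝ => Real.sin y - y * Real.cos y)
          (Real.cos x - (1 * Real.cos x + x * -Real.sin x)) x :=
        (Real.hasDerivAt_sin x).sub ((hasDerivAt_id' x).mul (Real.hasDerivAt_cos x))
      convert this using 1
      ring
    rw [h1.deriv]
    rfl

lemma differentiable_deriv_fn : ∀ n, Differentiable ℝ (deriv (fn n))
  | 0 => by
    rw [fn_zero, Real.deriv_sin]
    exact Real.differentiable_cos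
  | n + 1 => by
    rw [deriv_fn_succ]
    exact differentiable_id.mul (differentiable_fn n)

lemma deriv2_fn_succ (n : ℕ) :
    deriv (deriv (fn (n + 1))) = fun x => fn n x + x * deriv (fn n) x := by
  rw [deriv_fn_succ]
  funext x
  have h : HasDerivAt (fun y : ℝ => y * fn n y) (1 * fn n x + x * deriv (fn n) x) x :=
    (hasDerivAt_id x).mul ((differentiable_fn n x).hasDerivAt)
  rw [h.deriv]; ring

lemma recc : ∀ m : ℕ, ∀ x : ℝ, x * deriv (fn m) x = (2 * m + 1) * fn m x - fn (m + 1) x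
  | 0 => by
    intro x
    simp only [show (0:ℕ)+1 = 1 from rfl, fn_one, fn_zero, Real.deriv_sin]
    push_cast
    ring
  | m + 1 => by
    have IH := recc m
    have key : (fun x : ℝ => (2 * (m + 1 : ℕ) + 1) * fn (m + 1) x - fn (m + 2) x
        - x * deriv (fn (m + 1)) x) = fun _ => (0 : ℝ) := by
      apply eq_of_deriv_eq
      · exact ((differentiable_const _ |>.mul (differentiable_fn (m + 1))).sub
          (differentiable_fn (m + 2))).sub
          (differentiable_id.mul (differentiable_deriv_fn (m + 1)))
      · exact differentiable_const 0
      · simp [fn_succ_zero, deriv_fn_succ]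
      · intro x
        have h2 : HasDerivAt (deriv (fn (m + 1))) (fn m x + x * deriv (fn m) x) x := by
          have := (differentiable_deriv_fn (m + 1) x).hasDerivAt
          rwa [show deriv (deriv (fn (m + 1))) x = fn m x + x * deriv (fn m) x by
            rw [deriv2_fn_succ]] at this
        have h1 : HasDerivAt (fun y : ℝ => (2 * (m + 1 : ℕ) + 1) * fn (m + 1) y - fn (m + 2) y
            - y * deriv (fn (m + 1)) y)
            ((2 * (m + 1 : ℕ) + 1) * (x * fn m x) - (x * fn (m + 1) x)
              - (1 * deriv (fn (m + 1)) x + x * (fn m x + x * deriv (fn m) x))) x :=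
          (((hasDerivAt_fn_succ m x).const_mul _).sub (hasDerivAt_fn_succ (m + 1) x)).sub
            ((hasDerivAt_id x).mul h2)
        rw [h1.deriv, deriv_const]
        rw [deriv_fn_succ]
        push_cast
        linear_combination (-x) * (IH x)
    intro x
    have := congrFun key x
    push_cast at this ⊢
    linarith [this]


lemma j1_nonneg (g : ℝ → ℝ) : 0 ≤ j1 g := by
  rcases Set.eq_empty_or_nonempty {x : ℝ | 0 < x ∧ g x = 0} with h | h
  · simp [j1, h]
  · exact le_csInf h fun z hz => hz.1.le

open Real in
lemma fn_pos_on : ∀ m : ℕ, ∀ x : ℝ, 0 < x → x < π → 0 < fn m x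
  | 0 => fun x hx hxπ => Real.sin_pos_of_pos_of_lt_pi hx hxπ
  | m + 1 => fun x hx hxπ => by
    rw [fn_succ]
    apply intervalIntegral.intervalIntegral_pos_of_pos_on
    · exact (continuous_id.mul (continuous_fn m)).intervalIntegrable _ _
    · intro t ht
      exact mul_pos ht.1 (fn_pos_on m t ht.1 (ht.2.trans hxπ))
    · exact hx

open Real in
/-- if `fn m` has no zero in `(0, x]` then it is positive at `x`. -/
lemma fn_pos_aux (m : ℕ) (x : ℝ) (hx : 0 < x)
    (h : ∀ z : ℝ, 0 < z → z ≤ x → fn m z ≠ 0) : 0 < fn m x := by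
  by_contra hc
  push_neg at hc
  have hne : fn m x ≠ 0 := h x hx le_rfl
  have hxlt : fn m x < 0 := lt_of_le_of_ne hc hne
  rcases lt_or_ge x π with hxπ | hxπ
  · exact absurd (fn_pos_on m x hx hxπ) (not_lt.mpr hc)
  · have hhalf : 0 < fn m (π / 2) := fn_pos_on m (π / 2) (by positivity) (by linarith [pi_pos])
    have hle : π / 2 ≤ x := by linarith [pi_pos]
    have hsub := intermediate_value_Icc' hle ((continuous_fn m).continuousOn)
    have h0 : (0 : ℝ) ∈ Set.Icc (fn m x) (fn m (π / 2)) := ⟨hc, hhalf.le⟩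
    obtain ⟨z, hz, hz0⟩ := hsub h0
    exact h z (by linarith [pi_pos, hz.1]) hz.2 hz0

open Real in
lemma fn_pos_of_lt_j1 (m : ℕ) {x : ℝ} (hx : 0 < x) (hlt : x < j1 (fn m)) : 0 < fn m x := by
  apply fn_pos_aux m x hx
  intro z hz hzx hz0
  have : j1 (fn m) ≤ z := csInf_le ⟨0, fun y hy => hy.1.le⟩ ⟨hz, hz0⟩
  linarith

open Real in
lemma j1_zero_of_nonempty (m : ℕ) (hne : {x : ℝ | 0 < x ∧ fn m x = 0}.Nonempty) :
    fn m (j1 (fn m)) = 0 ∧ π ≤ j1 (fn m) := by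
  have hge : ∀ z ∈ {x : ℝ | 0 < x ∧ fn m x = 0}, π ≤ z := by
    intro z hz
    by_contra hlt
    push_neg at hlt
    exact absurd hz.2 (ne_of_gt (fn_pos_on m z hz.1 hlt))
  have hπ : π ≤ j1 (fn m) := le_csInf hne hge
  have hcl : j1 (fn m) ∈ closure {x : ℝ | 0 < x ∧ fn m x = 0} :=
    csInf_mem_closure hne ⟨0, fun y hy => hy.1.le⟩
  have hsub : closure {x : ℝ | 0 < x ∧ fn m x = 0} ⊆ {y : ℝ | fn m y = 0} :=
    closure_minimal (fun y hy => hy.2) (isClosed_eq (continuous_fn m) continuous_const)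
  exact ⟨hsub hcl, hπ⟩

open Real in
lemma fn_neg_on_interval (m : ℕ) {x : ℝ} (hx : x ∈ Set.Ioo (j1 (fn m)) (j1 (fn (m + 1)))) :
    fn m x < 0 := by
  obtain ⟨hax, hxb⟩ := hx
  have hx0 : 0 < x := lt_of_le_of_lt (j1_nonneg (fn m)) hax
  have hb0 : 0 < j1 (fn (m + 1)) := hx0.trans hxb
  -- the zero set of fn m must be nonempty
  rcases Set.eq_empty_or_nonempty {y : ℝ | 0 < y ∧ fn m y = 0} with hemp | hne
  · exfalso
    have hpos : ∀ y : ℝ, 0 < y → 0 < fn m y := by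
      intro y hy
      apply fn_pos_aux m y hy
      intro z hz _ hz0
      exact Set.eq_empty_iff_forall_notMem.mp hemp z ⟨hz, hz0⟩
    have hmono : StrictMonoOn (fn (m + 1)) (Set.Ici 0) := by
      apply strictMonoOn_of_deriv_pos (convex_Ici 0) ((continuous_fn (m + 1)).continuousOn)
      intro y hy
      rw [interior_Ici] at hy
      rw [deriv_fn_succ]
      exact mul_pos hy (hpos y hy)
    have hZemp : {y : ℝ | 0 < y ∧ fn (m + 1) y = 0} = ∅ := by
      ext y
      simp only [Set.mem_setOf_eq, Set.mem_empty_iff_false, iff_false, not_and]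
      intro hy
      have := hmono (Set.self_mem_Ici) (Set.mem_Ici.mpr hy.le) hy
      rw [fn_succ_zero] at this
      exact ne_of_gt this
    rw [j1, hZemp, Real.sInf_empty] at hb0
    exact lt_irrefl 0 hb0
  obtain ⟨hza, hπa⟩ := j1_zero_of_nonempty m hne
  set a := j1 (fn m) with ha
  have ha0 : 0 < a := lt_of_lt_of_le pi_pos hπa
  -- g y = fn m y / y^(2m+1) is strictly decreasing on [a, x]
  set g : ℝ → ℝ := fun y => fn m y / y ^ (2 * m + 1) with hg
  have hanti : StrictAntiOn g (Set.Icc a x) := by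
    apply strictAntiOn_of_deriv_neg (convex_Icc a x)
    · apply ContinuousOn.div ((continuous_fn m).continuousOn)
        (continuousOn_pow _)
      intro y hy
      exact pow_ne_zero _ (ne_of_gt (lt_of_lt_of_le ha0 hy.1))
    · intro y hy
      rw [interior_Icc] at hy
      have hy0 : 0 < y := ha0.trans hy.1
      have hd : HasDerivAt g ((deriv (fn m) y * y ^ (2 * m + 1)
          - fn m y * ((2 * m + 1 : ℕ) * y ^ (2 * m + 1 - 1))) / (y ^ (2 * m + 1)) ^ 2) y :=
        ((differentiable_fn m y).hasDerivAt).div (hasDerivAt_pow (2 * m + 1) y)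
          (pow_ne_zero _ (ne_of_gt hy0))
      rw [hd.deriv]
      apply div_neg_of_neg_of_pos
      · have hnum : deriv (fn m) y * y ^ (2 * m + 1)
            - fn m y * ((2 * m + 1 : ℕ) * y ^ (2 * m + 1 - 1))
            = y ^ (2 * m) * (y * deriv (fn m) y - (2 * m + 1) * fn m y) := by
          push_cast
          ring
        rw [hnum, recc m y]
        have hfn1 : 0 < fn (m + 1) y := fn_pos_of_lt_j1 (m + 1) hy0 (hy.2.trans hxb)
        have : (2 * (m : ℝ) + 1) * fn m y - fn (m + 1) y - (2 * m + 1) * fn m y = -fn (m + 1) y := by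
          ring
        rw [this]
        exact mul_neg_of_pos_of_neg (by positivity) (by linarith)
      · positivity
  have hgax : g x < g a := hanti (Set.left_mem_Icc.mpr hax.le) (Set.right_mem_Icc.mpr hax.le) hax
  rw [hg] at hgax
  simp only at hgax
  rw [hza] at hgax
  simp only [zero_div] at hgax
  have hxpow : (0:ℝ) < x ^ (2 * m + 1) := by positivity
  rcases div_neg_iff.mp hgax with h | h
  · exact absurd hxpow (not_lt.mpr h.2.le)
  · exact h.1


lemma recc2 (m : ℕ) (x : ℝ) :
    deriv (fn m) x + x * deriv (deriv (fn m)) x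
      = (2 * m + 1) * deriv (fn m) x - x * fn m x := by
  have hfeq : (fun y : ℝ => y * deriv (fn m) y)
      = fun y : ℝ => (2 * m + 1) * fn m y - fn (m + 1) y := funext fun y => recc m y
  have h1 : HasDerivAt (fun y : ℝ => y * deriv (fn m) y)
      (1 * deriv (fn m) x + x * deriv (deriv (fn m)) x) x :=
    (hasDerivAt_id x).mul ((differentiable_deriv_fn m x).hasDerivAt)
  have h2 : HasDerivAt (fun y : ℝ => (2 * m + 1 : ℝ) * fn m y - fn (m + 1) y)
      ((2 * m + 1 : ℝ) * deriv (fn m) x - x * fn m x) x :=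
    (((differentiable_fn m x).hasDerivAt).const_mul _).sub (hasDerivAt_fn_succ m x)
  have := h1.deriv
  rw [hfeq, h2.deriv] at this
  linarith [this]

lemma deriv2_closed (m : ℕ) :
    deriv (deriv (fn (m + 1))) = fun x => (2 * m + 2 : ℝ) * fn m x - fn (m + 1) x := by
  rw [deriv2_fn_succ]
  funext x
  have := recc m x
  linarith [this]

lemma deriv3_closed (m : ℕ) :
    deriv (deriv (deriv (fn (m + 1))))
      = fun x => (2 * m + 2 : ℝ) * deriv (fn m) x - x * fn m x := by
  rw [deriv2_closed]
  funext x
  have h : HasDerivAt (fun y : ℝ => (2 * m + 2 : ℝ) * fn m y - fn (m + 1) y)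
      ((2 * m + 2 : ℝ) * deriv (fn m) x - x * fn m x) x :=
    (((differentiable_fn m x).hasDerivAt).const_mul _).sub (hasDerivAt_fn_succ m x)
  exact h.deriv

lemma deriv4_val (m : ℕ) (x : ℝ) :
    deriv (deriv (deriv (deriv (fn (m + 1))))) x
      = (2 * m + 2 : ℝ) * deriv (deriv (fn m)) x - (fn m x + x * deriv (fn m) x) := by
  rw [deriv3_closed]
  have h : HasDerivAt (fun y : ℝ => (2 * m + 2 : ℝ) * deriv (fn m) y - y * fn m y)
      ((2 * m + 2 : ℝ) * deriv (deriv (fn m)) x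
        - (1 * fn m x + x * deriv (fn m) x)) x :=
    (((differentiable_deriv_fn m x).hasDerivAt).const_mul _).sub
      ((hasDerivAt_id x).mul ((differentiable_fn m x).hasDerivAt))
  rw [h.deriv]; ring

lemma w_pos (m : ℕ) {x : ℝ} (hx : 0 < x) (hP : fn m x < 0) (hv : 0 < fn (m + 1) x) :
    0 < w (fn (m + 1)) x := by
  set P := fn m x with hPe
  set Q := deriv (fn m) x with hQe
  set R := deriv (deriv (fn m)) x with hRe
  set v := fn (m + 1) x with hve
  have hrec : x * Q = (2 * m + 1) * P - v := recc m x
  have hR2 : x * R = 2 * m * Q - x * P := by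
    have := recc2 m x
    nlinarith [this]
  have e2 : deriv^[2] (fn (m + 1)) = deriv (deriv (fn (m + 1))) := by
    rw [show (2 : ℕ) = 1 + 1 from rfl, Function.iterate_succ_apply', Function.iterate_one]
  have e3 : deriv^[3] (fn (m + 1)) = deriv (deriv (deriv (fn (m + 1)))) := by
    rw [show (3 : ℕ) = 2 + 1 from rfl, Function.iterate_succ_apply', e2]
  have e4 : deriv^[4] (fn (m + 1)) = deriv (deriv (deriv (deriv (fn (m + 1))))) := by
    rw [show (4 : ℕ) = 3 + 1 from rfl, Function.iterate_succ_apply', e3]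
  have hD1 : deriv (fn (m + 1)) x = x * P := by rw [deriv_fn_succ]
  have hD2 : deriv^[2] (fn (m + 1)) x = (2 * m + 2 : ℝ) * P - v := by
    rw [e2, deriv2_closed]
  have hD3 : deriv^[3] (fn (m + 1)) x = (2 * m + 2 : ℝ) * Q - x * P := by
    rw [e3, deriv3_closed]
  have hD4 : deriv^[4] (fn (m + 1)) x = (2 * m + 2 : ℝ) * R - (P + x * Q) := by
    rw [e4, deriv4_val]
  have hQv : Q = ((2 * m + 1) * P - v) / x := by
    field_simp at hrec ⊢
    linarith [hrec]
  have hRv : R = (2 * m * Q - x * P) / x := by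
    field_simp at hR2 ⊢
    linarith [hR2]
  have key : w (fn (m + 1)) x = 4 * ((m : ℝ) + 1) / x ^ 4 *
      (x ^ 2 * v ^ 3 + (3 * m + 2) * x ^ 2 * (-P) * v ^ 2
        + (x ^ 2 + (m + 1) * (2 * m + 1)) * x ^ 2 * P ^ 2 * v
        + m * x ^ 4 * (-P) ^ 3) := by
    rw [w, Matrix.det_fin_three]
    rw [hD1, hD2, hD3, hD4, hQv, hRv, hQv]
    simp [Matrix.vecHead, Matrix.vecTail]
    field_simp
    ring
  rw [key]
  have hm : (0 : ℝ) ≤ (m : ℝ) := Nat.cast_nonneg m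
  have t1 : 0 < x ^ 2 * v ^ 3 := by positivity
  have t2 : 0 ≤ (3 * (m : ℝ) + 2) * x ^ 2 * (-P) * v ^ 2 := by
    have : (0:ℝ) ≤ -P := by linarith
    positivity
  have t3 : 0 ≤ (x ^ 2 + ((m : ℝ) + 1) * (2 * m + 1)) * x ^ 2 * P ^ 2 * v := by positivity
  have t4 : 0 ≤ (m : ℝ) * x ^ 4 * (-P) ^ 3 := by
    have : (0:ℝ) ≤ -P := by linarith
    positivity
  have hcoef : 0 < 4 * ((m : ℝ) + 1) / x ^ 4 := by positivity
  apply mul_pos hcoef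
  linarith


/-- coefficient of `x^(2k+2m+1)` in `fn m` -/
noncomputable def coef (m k : ℕ) : ℝ :=
  (-1 : ℝ) ^ k / ((2 : ℝ) ^ k * (Nat.factorial k : ℝ) * (Nat.doubleFactorial (2 * (k + m) + 1) : ℝ))

lemma coef_denom_pos (m k : ℕ) :
    (0:ℝ) < (2 : ℝ) ^ k * (Nat.factorial k : ℝ) * (Nat.doubleFactorial (2 * (k + m) + 1) : ℝ) := by
  have h1 : 0 < (Nat.factorial k : ℝ) := by exact_mod_cast Nat.factorial_pos k
  have h2 : 0 < (Nat.doubleFactorial (2 * (k + m) + 1) : ℝ) := by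
    exact_mod_cast Nat.doubleFactorial_pos _
  positivity

lemma abs_coef_le (m k : ℕ) : |coef m k| ≤ 1 / ((2 : ℝ) ^ k * (Nat.factorial k : ℝ)) := by
  rw [coef, abs_div, abs_pow, abs_neg, abs_one, one_pow]
  have hd := coef_denom_pos m k
  rw [abs_of_pos hd]
  have h2 : (1:ℝ) ≤ (Nat.doubleFactorial (2 * (k + m) + 1) : ℝ) := by
    exact_mod_cast Nat.doubleFactorial_pos _
  have h1 : 0 < (2 : ℝ) ^ k * (Nat.factorial k : ℝ) := by
    have : 0 < (Nat.factorial k : ℝ) := by exact_mod_cast Nat.factorial_pos k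
    positivity
  rw [div_le_div_iff₀ hd h1]
  nlinarith

lemma coef_zero (k : ℕ) : coef 0 k = (-1 : ℝ) ^ k / (Nat.factorial (2 * k + 1) : ℝ) := by
  rw [coef]
  congr 1
  have h : (2 * k + 1)! = (2 * k + 1)‼ * (2 * k)‼ := Nat.factorial_eq_mul_doubleFactorial _
  have h2 : (2 * k)‼ = 2 ^ k * k ! := Nat.doubleFactorial_two_mul k
  rw [show k + 0 = k from rfl]
  push_cast [h, h2]
  ring

lemma coef_succ (m k : ℕ) :
    coef (m + 1) k = coef m k / (2 * (k : ℝ) + 2 * m + 3) := by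
  rw [coef, coef]
  have h : (2 * (k + (m + 1)) + 1)‼ = (2 * (k + m) + 1 + 2) * (2 * (k + m) + 1)‼ := by
    rw [show 2 * (k + (m + 1)) + 1 = 2 * (k + m) + 1 + 2 by ring]
    exact Nat.doubleFactorial_add_two _
  rw [h]
  push_cast
  rw [div_div]
  congr 1
  ring

lemma hasSum_fn : ∀ m : ℕ, ∀ x : ℝ, 0 < x →
    HasSum (fun k => coef m k * x ^ (2 * k + 2 * m + 1)) (fn m x)
  | 0 => by
    intro x _
    have := Real.hasSum_sin x
    convert this using 2 with k
    rw [coef_zero]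
    ring
    rfl
  | m + 1 => by
    intro x hx
    -- term-by-term integration over Ioc 0 x
    set F : ℕ → ℝ → ℝ := fun k t => coef m k * t ^ (2 * k + 2 * m + 2) with hF
    have hcont : ∀ k, Continuous (F k) := fun k => continuous_const.mul (continuous_pow _)
    have hμ : ∀ k, MeasureTheory.Integrable (F k)
        (MeasureTheory.volume.restrict (Set.Ioc (0:ℝ) x)) := fun k =>
      (hcont k).integrableOn_Ioc
    -- the norm integrals
    have hnormval : ∀ k, (∫ t in Set.Ioc (0:ℝ) x, ‖F k t‖)
        = |coef m k| * (x ^ (2 * k + 2 * m + 3) / (2 * (k:ℝ) + 2 * m + 3)) := by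
      intro k
      have hcongr : ∀ t ∈ Set.Ioc (0:ℝ) x, ‖F k t‖ = |coef m k| * t ^ (2 * k + 2 * m + 2) := by
        intro t ht
        rw [hF]
        simp only [Real.norm_eq_abs, abs_mul, abs_pow, abs_of_pos ht.1]
      rw [MeasureTheory.setIntegral_congr_fun measurableSet_Ioc hcongr]
      rw [MeasureTheory.integral_const_mul, ← intervalIntegral.integral_of_le hx.le,
        integral_pow]
      push_cast
      ring
    have hsum_norm : Summable fun k => ∫ t in Set.Ioc (0:ℝ) x, ‖F k t‖ := by
      have hb : Summable (fun k : ℕ => x ^ (2*m+3) * ((x^2/2)^k / (k ! : ℝ))) :=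
        (Real.summable_pow_div_factorial (x ^ 2 / 2)).mul_left _
      refine Summable.of_nonneg_of_le
        (fun k => MeasureTheory.integral_nonneg fun t => norm_nonneg _) (fun k => ?_) hb
      rw [hnormval k]
      have h1 : |coef m k| ≤ 1 / ((2:ℝ) ^ k * k !) := abs_coef_le m k
      have h3 : (0:ℝ) < 2 * (k:ℝ) + 2 * m + 3 := by positivity
      calc |coef m k| * (x ^ (2 * k + 2 * m + 3) / (2 * (k:ℝ) + 2 * m + 3))
            ≤ 1 / ((2:ℝ) ^ k * k !) * x ^ (2 * k + 2 * m + 3) := by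
              have hxp : (0:ℝ) < x ^ (2 * k + 2 * m + 3) := pow_pos hx _
              have h4 : x ^ (2 * k + 2 * m + 3) / (2 * (k:ℝ) + 2 * m + 3)
                  ≤ x ^ (2 * k + 2 * m + 3) := by
                apply div_le_self hxp.le
                linarith [Nat.cast_nonneg (α := ℝ) k, Nat.cast_nonneg (α := ℝ) m]
              have habs : (0:ℝ) ≤ |coef m k| := abs_nonneg _
              have h5 : (0:ℝ) < (2:ℝ) ^ k * k ! := by
                have : (0:ℝ) < (k ! : ℝ) := by exact_mod_cast Nat.factorial_pos k
                positivity
              nlinarith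
          _ = x ^ (2 * m + 3) * ((x ^ 2 / 2) ^ k / k !) := by
              rw [div_pow]
              field_simp
              ring
    have hswap := MeasureTheory.hasSum_integral_of_summable_integral_norm hμ hsum_norm
    -- identify the integral of the sum
    have hpt : ∀ t ∈ Set.Ioc (0:ℝ) x, (∑' k, F k t) = t * fn m t := by
      intro t ht
      have h := (hasSum_fn m t ht.1).mul_left t
      have h2 : (fun k => t * (coef m k * t ^ (2 * k + 2 * m + 1))) = fun k => F k t := by
        funext k
        rw [hF]
        ring
      rw [h2] at h
      exact h.tsum_eq
    rw [MeasureTheory.setIntegral_congr_fun measurableSet_Ioc hpt] at hswap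
    have hfneq : (∫ t in Set.Ioc (0:ℝ) x, t * fn m t) = fn (m + 1) x := by
      rw [show fn (m+1) x = ∫ t in (0:ℝ)..x, t * fn m t from rfl,
        intervalIntegral.integral_of_le hx.le]
    rw [hfneq] at hswap
    -- compute each term integral
    have hterm : ∀ k, (∫ t in Set.Ioc (0:ℝ) x, F k t)
        = coef (m + 1) k * x ^ (2 * k + 2 * (m + 1) + 1) := by
      intro k
      rw [hF]
      simp only
      rw [← intervalIntegral.integral_of_le hx.le, intervalIntegral.integral_const_mul,
        integral_pow, coef_succ]
      push_cast
      field_simp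
      ring
    rw [funext hterm] at hswap
    exact hswap


open Real in
lemma gamma_half : ∀ j : ℕ, Real.Gamma ((j : ℝ) + 1 / 2 + 1)
    = Real.sqrt π * (Nat.doubleFactorial (2 * j + 1) : ℝ) / 2 ^ (j + 1)
  | 0 => by
    rw [show ((0:ℕ) : ℝ) + 1 / 2 + 1 = 1 / 2 + 1 by norm_num, Real.Gamma_add_one (by norm_num),
      Real.Gamma_one_half_eq]
    norm_num [Nat.doubleFactorial]
    ring
  | j + 1 => by
    have IH := gamma_half j
    have h1 : ((j + 1 : ℕ) : ℝ) + 1 / 2 + 1 = ((j : ℝ) + 1 / 2 + 1) + 1 := by push_cast; ring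
    rw [h1, Real.Gamma_add_one (by positivity)]
    rw [IH]
    have h2 : (2 * (j + 1) + 1)‼ = (2 * j + 1 + 2) * (2 * j + 1)‼ := by
      rw [show 2 * (j + 1) + 1 = 2 * j + 1 + 2 by ring]
      exact Nat.doubleFactorial_add_two _
    rw [h2]
    push_cast
    field_simp
    ring

open Real in
lemma besselJ_eq (m : ℕ) {x : ℝ} (hx : 0 < x) :
    besselJ ((m : ℝ) + 1 / 2) x
      = (Real.sqrt 2 / Real.sqrt π * x ^ (-((m : ℝ) + 1 / 2))) * fn m x := by
  set C : ℝ := Real.sqrt 2 / Real.sqrt π * x ^ (-((m : ℝ) + 1 / 2)) with hC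
  have hsum := (hasSum_fn m x hx).mul_left C
  have hterm : ∀ k : ℕ, (-1 : ℝ) ^ k / ((Nat.factorial k : ℝ)
        * Real.Gamma ((k : ℝ) + ((m : ℝ) + 1 / 2) + 1)) * (x / 2) ^ (2 * (k : ℝ) + ((m : ℝ) + 1 / 2))
      = C * (coef m k * x ^ (2 * k + 2 * m + 1)) := by
    intro k
    have hΓ : (k : ℝ) + ((m : ℝ) + 1 / 2) + 1 = ((k + m : ℕ) : ℝ) + 1 / 2 + 1 := by
      push_cast; ring
    rw [hΓ, gamma_half (k + m)]
    have hexp : (2 * (k : ℝ) + ((m : ℝ) + 1 / 2)) = ((2 * k + m : ℕ) : ℝ) + 1 / 2 := by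
      push_cast; ring
    rw [hexp]
    have hx2 : (0:ℝ) < x / 2 := by linarith
    rw [Real.rpow_add hx2, Real.rpow_natCast]
    have hxpow : x ^ (-((m : ℝ) + 1 / 2)) * x ^ (2 * k + 2 * m + 1 : ℕ)
        = x ^ ((2 * k + m : ℕ) : ℝ) * x ^ ((1:ℝ)/2) := by
      rw [← Real.rpow_natCast x (2 * k + 2 * m + 1), ← Real.rpow_add hx, ← Real.rpow_add hx]
      congr 1
      push_cast; ring
    have hC2 : C * (coef m k * x ^ (2 * k + 2 * m + 1))
        = Real.sqrt 2 / Real.sqrt π * coef m k * (x ^ (2 * k + m) * x ^ ((1:ℝ)/2)) := by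
      rw [hC]
      rw [show Real.sqrt 2 / Real.sqrt π * x ^ (-((m : ℝ) + 1 / 2)) * (coef m k * x ^ (2 * k + 2 * m + 1))
        = Real.sqrt 2 / Real.sqrt π * coef m k * (x ^ (-((m : ℝ) + 1 / 2)) * x ^ (2 * k + 2 * m + 1 : ℕ)) by ring]
      rw [hxpow, Real.rpow_natCast]
    rw [hC2]
    rw [div_pow, Real.div_rpow hx.le (by norm_num : (0:ℝ) ≤ 2)]
    rw [← Real.sqrt_eq_rpow x, ← Real.sqrt_eq_rpow 2]
    rw [coef]
    have hπ : Real.sqrt π ≠ 0 := by positivity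
    have h2 : Real.sqrt 2 ≠ 0 := by positivity
    have hxs : Real.sqrt x ≠ 0 := by positivity
    have hfac : ((k ! : ℝ)) ≠ 0 := by exact_mod_cast Nat.factorial_ne_zero k
    have hdf : ((2 * (k + m) + 1)‼ : ℝ) ≠ 0 := by
      have := Nat.doubleFactorial_pos (2 * (k + m) + 1)
      positivity
    have hs2 : Real.sqrt 2 * Real.sqrt 2 = 2 := Real.mul_self_sqrt (by norm_num)
    field_simp
    ring_nf
    rw [sq, hs2]
    ring
  rw [besselJ, tsum_congr hterm, hsum.tsum_eq]

lemma zeroset_deriv (m : ℕ) :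
    {y : ℝ | 0 < y ∧ deriv (fn (m + 1)) y = 0} = {y : ℝ | 0 < y ∧ fn m y = 0} := by
  ext y
  simp only [Set.mem_setOf_eq, deriv_fn_succ]
  constructor
  · rintro ⟨hy, h⟩
    rcases mul_eq_zero.mp h with h | h
    · exact absurd h (ne_of_gt hy)
    · exact ⟨hy, h⟩
  · rintro ⟨hy, h⟩
    exact ⟨hy, by rw [h, mul_zero]⟩

open Real in
lemma zeroset_bessel (m : ℕ) :
    {y : ℝ | 0 < y ∧ besselJ ((m : ℝ) + 1 / 2) y = 0} = {y : ℝ | 0 < y ∧ fn m y = 0} := by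
  ext y
  simp only [Set.mem_setOf_eq]
  constructor
  · rintro ⟨hy, h⟩
    rw [besselJ_eq m hy] at h
    rcases mul_eq_zero.mp h with h | h
    · exfalso
      have h1 : (0:ℝ) < Real.sqrt 2 / Real.sqrt π := by positivity
      have h2 : (0:ℝ) < y ^ (-((m : ℝ) + 1 / 2)) := Real.rpow_pos_of_pos hy _
      nlinarith
    · exact ⟨hy, h⟩
  · rintro ⟨hy, h⟩
    refine ⟨hy, ?_⟩
    rw [besselJ_eq m hy, h, mul_zero]

theorem stmt_13 (n : ℕ) (hn : 1 ≤ n) :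
    (∀ x ∈ Set.Ioo (j1 (deriv (fn n))) (j1 (fn n)), 0 < w (fn n) x) ∧
    j1 (deriv (fn n)) = j1 (besselJ ((n : ℝ) - 1 / 2)) ∧
    j1 (fn n) = j1 (besselJ ((n : ℝ) + 1 / 2)) := by
  obtain ⟨m, rfl⟩ : ∃ m, n = m + 1 := ⟨n - 1, (Nat.succ_pred_eq_of_pos hn).symm⟩
  have hjd : j1 (deriv (fn (m + 1))) = j1 (fn m) := congrArg sInf (zeroset_deriv m)
  have hjb : ∀ m' : ℕ, j1 (besselJ ((m' : ℝ) + 1 / 2)) = j1 (fn m') :=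
    fun m' => congrArg sInf (zeroset_bessel m')
  refine ⟨?_, ?_, ?_⟩
  · intro x hx
    rw [hjd] at hx
    have hx0 : 0 < x := lt_of_le_of_lt (j1_nonneg (fn m)) hx.1
    have hP : fn m x < 0 := fn_neg_on_interval m hx
    have hv : 0 < fn (m + 1) x := fn_pos_of_lt_j1 (m + 1) hx0 hx.2
    exact w_pos m hx0 hP hv
  · have hcast : ((m + 1 : ℕ) : ℝ) - 1 / 2 = (m : ℝ) + 1 / 2 := by push_cast; ring
    rw [hjd, hcast, hjb m]
  · have hcast : ((m + 1 : ℕ) : ℝ) + 1 / 2 = ((m + 1 : ℕ) : ℝ) + 1 / 2 := rfl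
    rw [hjb (m + 1)]
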